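/- Let 𝒳 ⊂ ℝ^{n_x} be a hyperrectangle of positive Lebesgue measure, q a continuous Markov kernel density on 𝒳 × 𝒳, and (𝒳_i)_{i∈X} a finite hyperrectangular partition of 𝒳 (|X| = N) with polytopes ℙ_i and per-step functional Φ as defined; let δ̄ be the maximum side length over all cells, let L ≥ 0, and define ε(p′) = Σ_{j∈X} p′_j log(1 + (n_x/(2 p′_j)) L δ̄^{n_x+1}) (terms with p′_j = 0 taken to be 0) and Φ^ε(p′, V) = Φ(p′, V) + ε(p′). For x ∈ 𝒳 let P_x ∈ ℝ^N be the vector P_x(j) = ∫_{𝒳_j} q(x, x′) dx′. Suppose (a) for every x ∈ 𝒳, Φ^ε(P_x, 0) ≥ ∫_𝒳 q(x, x′) log(q(x, x′) λ(𝒳)) dx′; and (b) 𝒱 : 𝒳 → ℝ is bounded and measurable and V ∈ ℝ^N satisfies V_j ≥ sup_{x′∈𝒳_j} 𝒱(x′) for every j ∈ X. Then for every i ∈ X, sup_{p′∈ℙ_i} Φ^ε(p′, V) ≥ sup_{x∈𝒳_i} [ ∫_𝒳 q(x, x′) log(q(x, x′) λ(𝒳)) dx′ + ∫_𝒳 q(x,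 x′) 𝒱(x′) dx′ ]. -/

import Mathlib

open MeasureTheory Real Finset

noncomputable section

/-- `p * log (p * R) ≤ log R` for `0 ≤ p ≤ 1`, `1 ≤ R`. -/
lemma aux_plog_le (p R : ℝ) (hp0 : 0 ≤ p) (hp1 : p ≤ 1) (hR : 1 ≤ R) :
    p * Real.log (p * R) ≤ Real.log R := by
  have hlogR : 0 ≤ Real.log R := Real.log_nonneg hR
  rcases eq_or_lt_of_le hp0 with h | h
  · simp [← h, hlogR]
  · have hpR : 0 < p * R := mul_pos h (lt_of_lt_of_le one_pos hR)
    have h1 : Real.log (p * R) ≤ Real.log R :=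
      Real.log_le_log hpR (by nlinarith)
    calc p * Real.log (p * R) ≤ p * Real.log R :=
          mul_le_mul_of_nonneg_left h1 hp0
      _ ≤ 1 * Real.log R := mul_le_mul_of_nonneg_right hp1 hlogR
      _ = Real.log R := one_mul _

/-- `p * log (1 + c / p) ≤ c` for `0 ≤ p`, `0 ≤ c` (with junk value convention at `p = 0`). -/
lemma aux_plog_div_le (p c : ℝ) (hp : 0 ≤ p) (hc : 0 ≤ c) :
    p * Real.log (1 + c / p) ≤ c := by
  rcases eq_or_lt_of_le hp with h | h
  · simp [← h, hc]
  · have hpos : 0 < 1 + c / p := by positivity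
    have h1 : Real.log (1 + c / p) ≤ c / p := by
      have := Real.log_le_sub_one_of_pos hpos
      linarith
    calc p * Real.log (1 + c / p) ≤ p * (c / p) := mul_le_mul_of_nonneg_left h1 hp
      _ = c := by field_simp

/-- Integral over a finite a.e.-disjoint union equals the sum of the integrals. -/
lemma aux_partition_integral {nx N : ℕ} (Xp : Fin N → Set (Fin nx → ℝ))
    (hm : ∀ j, MeasurableSet (Xp j))
    (hd : ∀ i j, i ≠ j → volume (Xp i ∩ Xp j) = 0)
    (f : (Fin nx → ℝ) → ℝ) (hf : IntegrableOn f (⋃ j, Xp j)) :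
    ∫ x in ⋃ j, Xp j, f x = ∑ j, ∫ x in Xp j, f x := by
  rw [integral_iUnion_ae (fun j => (hm j).nullMeasurableSet)
      (fun i j hij => hd i j hij) hf, tsum_fintype]

/-- induction step for the locally-corrected DP upper bound: if the
ε-corrected one-step functional dominates the continuous one-step KL term pointwise,
and `V` dominates `𝒱` cell-wise, then for every cell `i` the robust ε-corrected
one-step value dominates the continuous one-step value over the cell. -/
theorem local_correction_induction_step
    (nx N : ℕ)
    (a b : Fin nx → ℝ)
    (𝒳 : Set (Fin nx → ℝ)) (h𝒳 : 𝒳 = Set.Icc a b)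
    (h𝒳vol : 0 < volume 𝒳)
    (q : (Fin nx → ℝ) → (Fin nx → ℝ) → ℝ)
    (hqcont : ContinuousOn (fun z : (Fin nx → ℝ) × (Fin nx → ℝ) => q z.1 z.2) (𝒳 ×ˢ 𝒳))
    (hqnonneg : ∀ x ∈ 𝒳, ∀ x' ∈ 𝒳, 0 ≤ q x x')
    (hqint : ∀ x ∈ 𝒳, (∫ x' in 𝒳, q x x') = 1)
    -- hyperrectangular partition of 𝒳
    (Xp : Fin N → Set (Fin nx → ℝ))
    (α β : Fin N → Fin nx → ℝ)
    (hXrect : ∀ i, Xp i = Set.Icc (α i) (β i))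
    (hXpos : ∀ i, 0 < volume (Xp i))
    (hXcover : (⋃ i, Xp i) = 𝒳)
    (hXdisj : ∀ i j, i ≠ j → volume (Xp i ∩ Xp j) = 0)
    -- maximum side length δ̄ over all cells and dimensions
    (δbar : ℝ)
    (hδbar₁ : ∀ i j, β i j - α i j ≤ δbar)
    (hδbar₂ : ∃ i j, β i j - α i j = δbar)
    (L : ℝ) (hL : 0 ≤ L)
    -- abstraction data
    (Pup Plow : Fin N → Fin N → ℝ)
    (hPup : ∀ i j, IsGreatest ((fun x => ∫ x' in Xp j, q x x') '' Xp i) (Pup i j))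
    (hPlow : ∀ i j, IsLeast ((fun x => ∫ x' in Xp j, q x x') '' Xp i) (Plow i j))
    (ℙ : Fin N → Set (Fin N → ℝ))
    (hℙ : ∀ i, ℙ i = {p' : Fin N → ℝ |
        (∀ j, 0 ≤ p' j) ∧ (∑ j, p' j) = 1 ∧ ∀ j, Plow i j ≤ p' j ∧ p' j ≤ Pup i j})
    (Φ : (Fin N → ℝ) → (Fin N → ℝ) → ℝ)
    (hΦ : ∀ p' V, Φ p' V =
        (∑ j, p' j * Real.log (p' j * (volume 𝒳).toReal / (volume (Xp j)).toReal))
        + ∑ j, p' j * V j)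
    -- ε correction and corrected functional
    (ε : (Fin N → ℝ) → ℝ)
    (hε : ∀ p', ε p' =
        ∑ j, p' j * Real.log (1 + (nx : ℝ) / (2 * p' j) * L * δbar ^ (nx + 1)))
    (Φε : (Fin N → ℝ) → (Fin N → ℝ) → ℝ)
    (hΦε : ∀ p' V, Φε p' V = Φ p' V + ε p')
    -- induced discrete transition probabilities P_x
    (Px : (Fin nx → ℝ) → Fin N → ℝ)
    (hPx : ∀ x j, Px x j = ∫ x' in Xp j, q x x')
    -- hypothesis (a): pointwise domination of the one-step continuous KL term
    (ha : ∀ x ∈ 𝒳,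
        Φε (Px x) 0 ≥ ∫ x' in 𝒳, q x x' * Real.log (q x x' * (volume 𝒳).toReal))
    -- hypothesis (b): 𝒱 bounded measurable, dominated cell-wise by V
    (𝒱 : (Fin nx → ℝ) → ℝ)
    (h𝒱meas : Measurable 𝒱)
    (h𝒱bdd : ∃ M : ℝ, ∀ x ∈ 𝒳, |𝒱 x| ≤ M)
    (V : Fin N → ℝ)
    (hV : ∀ j, ∀ x' ∈ Xp j, 𝒱 x' ≤ V j) :
    ∀ i : Fin N,
      sSup ((fun p' => Φε p' V) '' ℙ i)
        ≥ sSup ((fun x =>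
            (∫ x' in 𝒳, q x x' * Real.log (q x x' * (volume 𝒳).toReal))
            + ∫ x' in 𝒳, q x x' * 𝒱 x') '' Xp i) := by
  intro i
  -- basic facts
  have h𝒳c : IsCompact 𝒳 := h𝒳 ▸ isCompact_Icc
  have h𝒳m : MeasurableSet 𝒳 := h𝒳 ▸ measurableSet_Icc
  have hXm : ∀ j, MeasurableSet (Xp j) := fun j => (hXrect j) ▸ measurableSet_Icc
  have hsub : ∀ j, Xp j ⊆ 𝒳 := fun j => hXcover ▸ Set.subset_iUnion Xp j
  have hvXlt : volume 𝒳 < ⊤ := h𝒳c.measure_lt_top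
  have hvX : 0 < (volume 𝒳).toReal := ENNReal.toReal_pos h𝒳vol.ne' hvXlt.ne
  have hvj : ∀ j, 0 < (volume (Xp j)).toReal := fun j =>
    ENNReal.toReal_pos (hXpos j).ne' (lt_of_le_of_lt (measure_mono (hsub j)) hvXlt).ne
  have hR : ∀ j, 1 ≤ (volume 𝒳).toReal / (volume (Xp j)).toReal := fun j =>
    (one_le_div (hvj j)).2 (ENNReal.toReal_mono hvXlt.ne (measure_mono (hsub j)))
  -- δbar nonneg
  have hδnn : 0 ≤ δbar := by
    obtain ⟨i0, j0, hij0⟩ := hδbar₂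
    have hne : (Xp i0).Nonempty := nonempty_of_measure_ne_zero (hXpos i0).ne'
    rw [hXrect i0] at hne
    have hab : α i0 ≤ β i0 := Set.nonempty_Icc.mp hne
    have := hab j0
    linarith
  set c : ℝ := (nx : ℝ) / 2 * L * δbar ^ (nx + 1) with hcdef
  have hc : 0 ≤ c := by positivity
  -- continuity / integrability of q x ⬝ on 𝒳
  have hqx_cont : ∀ x ∈ 𝒳, ContinuousOn (fun x' => q x x') 𝒳 := fun x hx =>
    hqcont.comp ((continuous_const.prodMk continuous_id).continuousOn)
      (fun x' hx' => ⟨hx, hx'⟩)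
  have hqint' : ∀ x ∈ 𝒳, IntegrableOn (fun x' => q x x') 𝒳 := fun x hx =>
    (hqx_cont x hx).integrableOn_compact h𝒳c
  obtain ⟨M, hM⟩ := h𝒱bdd
  have hq𝒱int : ∀ x ∈ 𝒳, IntegrableOn (fun x' => q x x' * 𝒱 x') 𝒳 := by
    intro x hx
    have hb : ∀ᵐ x' ∂(volume.restrict 𝒳), ‖𝒱 x'‖ ≤ M := by
      rw [ae_restrict_iff' h𝒳m]
      exact ae_of_all _ fun x' hx' => by simpa using hM x' hx'
    have := (hqint' x hx).bdd_mul (c := M) h𝒱meas.aestronglyMeasurable hb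
    simpa [mul_comm, IntegrableOn] using this
  -- decomposition of integrals over the partition
  have hdecomp : ∀ f : (Fin nx → ℝ) → ℝ, IntegrableOn f 𝒳 →
      ∫ x' in 𝒳, f x' = ∑ j, ∫ x' in Xp j, f x' := by
    intro f hf
    rw [← hXcover] at hf ⊢
    exact aux_partition_integral Xp hXm hXdisj f hf
  -- `Px x ∈ ℙ i` for `x ∈ Xp i`
  have hPxmem : ∀ x ∈ Xp i, Px x ∈ ℙ i := by
    intro x hx
    have hx𝒳 : x ∈ 𝒳 := hsub i hx
    rw [hℙ]
    refine ⟨fun j => ?_, ?_, fun j => ⟨?_, ?_⟩⟩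
    · rw [hPx]
      exact setIntegral_nonneg (hXm j) fun x' hx' => hqnonneg x hx𝒳 x' (hsub j hx')
    · simp only [hPx]
      rw [← hdecomp _ (hqint' x hx𝒳)]
      exact hqint x hx𝒳
    · rw [hPx]; exact (hPlow i j).2 ⟨x, hx, rfl⟩
    · rw [hPx]; exact (hPup i j).2 ⟨x, hx, rfl⟩
  -- key pointwise inequality
  have hval : ∀ x ∈ Xp i,
      (∫ x' in 𝒳, q x x' * Real.log (q x x' * (volume 𝒳).toReal))
        + (∫ x' in 𝒳, q x x' * 𝒱 x') ≤ Φε (Px x) V := by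
    intro x hx
    have hx𝒳 : x ∈ 𝒳 := hsub i hx
    have h1 : (∫ x' in 𝒳, q x x' * Real.log (q x x' * (volume 𝒳).toReal))
        ≤ Φε (Px x) 0 := ha x hx𝒳
    have h2 : (∫ x' in 𝒳, q x x' * 𝒱 x') ≤ ∑ j, Px x j * V j := by
      rw [hdecomp _ (hq𝒱int x hx𝒳)]
      apply Finset.sum_le_sum
      intro j _
      have hint1 : IntegrableOn (fun x' => q x x' * 𝒱 x') (Xp j) :=
        (hq𝒱int x hx𝒳).mono_set (hsub j)
      have hint2 : IntegrableOn (fun x' => q x x' * V j) (Xp j) :=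
        ((hqint' x hx𝒳).mono_set (hsub j)).mul_const _
      calc (∫ x' in Xp j, q x x' * 𝒱 x') ≤ ∫ x' in Xp j, q x x' * V j :=
            setIntegral_mono_on hint1 hint2 (hXm j) fun x' hx' =>
              mul_le_mul_of_nonneg_left (hV j x' hx') (hqnonneg x hx𝒳 x' (hsub j hx'))
        _ = (∫ x' in Xp j, q x x') * V j := by rw [integral_mul_const]
        _ = Px x j * V j := by rw [hPx]
    have h3 : Φε (Px x) V = Φε (Px x) 0 + ∑ j, Px x j * V j := by
      rw [hΦε, hΦε, hΦ, hΦ]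
      simp only [Pi.zero_apply, mul_zero, Finset.sum_const_zero]
      ring
    linarith
  -- the set on the left is bounded above
  have hBdd : BddAbove ((fun p' => Φε p' V) '' ℙ i) := by
    refine ⟨∑ j, (Real.log ((volume 𝒳).toReal / (volume (Xp j)).toReal) + |V j| + c), ?_⟩
    rintro y ⟨p', hp', rfl⟩
    rw [hℙ] at hp'
    obtain ⟨hnn, hsum, -⟩ := hp'
    have hle1 : ∀ j, p' j ≤ 1 := fun j =>
      hsum ▸ Finset.single_le_sum (fun k _ => hnn k) (Finset.mem_univ j)
    show Φε p' V ≤ _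
    rw [hΦε, hΦ, hε, add_assoc, ← Finset.sum_add_distrib, ← Finset.sum_add_distrib]
    apply Finset.sum_le_sum
    intro j _
    have b1 : p' j * Real.log (p' j * (volume 𝒳).toReal / (volume (Xp j)).toReal)
        ≤ Real.log ((volume 𝒳).toReal / (volume (Xp j)).toReal) := by
      rw [mul_div_assoc]
      exact aux_plog_le _ _ (hnn j) (hle1 j) (hR j)
    have b2 : p' j * V j ≤ |V j| := by
      refine le_trans (le_abs_self _) ?_
      rw [abs_mul, abs_of_nonneg (hnn j)]
      exact mul_le_of_le_one_left (abs_nonneg _) (hle1 j)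
    have b3 : p' j * Real.log (1 + (nx : ℝ) / (2 * p' j) * L * δbar ^ (nx + 1)) ≤ c := by
      have heq : (nx : ℝ) / (2 * p' j) * L * δbar ^ (nx + 1) = c / p' j := by
        rw [hcdef]; ring
      rw [heq]
      exact aux_plog_div_le _ _ (hnn j) hc
    linarith
  -- conclude
  rw [ge_iff_le]
  refine csSup_le (((nonempty_of_measure_ne_zero (hXpos i).ne')).image _) ?_
  rintro y ⟨x, hx, rfl⟩
  exact le_trans (hval x hx) (le_csSup hBdd ⟨Px x, hPxmem x hx, rfl⟩)
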